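/- Let σ > 0 and let Φ_L(ω, σ) = σπ ∑_{k∈ℤ} e^{−σ|ω + 2πk|}. Then (σ²π/2) · ∫_ℝ (e^{−σ|ω|}/Φ_L(ω, σ))² dω = (1 − tanh(σπ)/(2σπ)) · tanh(σπ). -/

import Mathlib

open Real MeasureTheory Set

noncomputable def lorentzSc (σ t : ℝ) : ℝ :=
  (Real.exp (-(σ*t)) + Real.exp (σ*t - 2*π*σ)) / (1 - Real.exp (-(2*π*σ)))

lemma lorentz_hasSum_base (σ : ℝ) (hσ : 0 < σ) {t : ℝ} (ht0 : 0 ≤ t) (ht2 : t ≤ 2*π) :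
    HasSum (fun k : ℤ => Real.exp (-σ * |t + 2*π*k|)) (lorentzSc σ t) := by
  have hπ := Real.pi_pos
  have hr0 : (0:ℝ) ≤ Real.exp (-(2*π*σ)) := (Real.exp_pos _).le
  have hr1 : Real.exp (-(2*π*σ)) < 1 := by
    rw [Real.exp_lt_one_iff]; nlinarith
  have hgeo := hasSum_geometric_of_lt_one hr0 hr1
  have hf : HasSum (fun n : ℕ => Real.exp (-(σ*t)) * Real.exp (-(2*π*σ)) ^ n)
      (Real.exp (-(σ*t)) * (1 - Real.exp (-(2*π*σ)))⁻¹) := hgeo.mul_left _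
  have hg : HasSum (fun n : ℕ => Real.exp (σ*t - 2*π*σ) * Real.exp (-(2*π*σ)) ^ n)
      (Real.exp (σ*t - 2*π*σ) * (1 - Real.exp (-(2*π*σ)))⁻¹) := hgeo.mul_left _
  have h := hf.int_rec hg
  have heq : (fun k : ℤ => Real.exp (-σ * |t + 2*π*k|)) =
      fun k : ℤ => Int.rec (fun n : ℕ => Real.exp (-(σ*t)) * Real.exp (-(2*π*σ)) ^ n)
        (fun n : ℕ => Real.exp (σ*t - 2*π*σ) * Real.exp (-(2*π*σ)) ^ n) k := by
    funext k
    cases k with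
    | ofNat n =>
        show Real.exp (-σ * |t + 2*π*(n:ℤ)|) = Real.exp (-(σ*t)) * Real.exp (-(2*π*σ)) ^ n
        have habs : |t + 2*π*((n:ℤ):ℝ)| = t + 2*π*n := by
          push_cast
          rw [abs_of_nonneg]; positivity
        rw [habs, ← Real.exp_nat_mul, ← Real.exp_add]
        push_cast
        ring_nf
    | negSucc n =>
        show Real.exp (-σ * |t + 2*π*((Int.negSucc n : ℤ):ℝ)|)
            = Real.exp (σ*t - 2*π*σ) * Real.exp (-(2*π*σ)) ^ n
        have hc : ((Int.negSucc n : ℤ):ℝ) = -((n:ℝ)+1) := by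
          push_cast [Int.negSucc_eq]; ring
        have habs : |t + 2*π*(-((n:ℝ)+1))| = 2*π*((n:ℝ)+1) - t := by
          rw [abs_of_nonpos]
          · ring
          · have h0 : (0:ℝ) ≤ (n:ℝ) := Nat.cast_nonneg n
            nlinarith
        rw [hc, habs, ← Real.exp_nat_mul, ← Real.exp_add]
        ring_nf

  rw [heq]
  convert h using 1
  rw [lorentzSc]
  ring

lemma lorentz_hasSum_shift {σ S : ℝ} {a : ℝ} (n : ℤ)
    (h : HasSum (fun k : ℤ => Real.exp (-σ * |a + 2*π*k|)) S) :
    HasSum (fun k : ℤ => Real.exp (-σ * |(a + 2*π*n) + 2*π*k|)) S := by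
  have := (Equiv.hasSum_iff (f := fun k : ℤ => Real.exp (-σ * |a + 2*π*k|)) (a := S)
    (Equiv.addRight n)).mpr h
  convert this using 2 with k
  show Real.exp (-σ * |(a + 2*π*n) + 2*π*k|) = Real.exp (-σ * |a + 2*π*((k + n : ℤ):ℝ)|)
  push_cast
  ring_nf

lemma lorentz_hasSum (σ : ℝ) (hσ : 0 < σ) (ω : ℝ) :
    HasSum (fun k : ℤ => Real.exp (-σ * |ω + 2*π*k|))
      (lorentzSc σ (ω - 2*π*⌊ω/(2*π)⌋)) := by
  have hπ := Real.pi_pos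
  have h2π : (0:ℝ) < 2*π := by linarith
  set n : ℤ := ⌊ω/(2*π)⌋ with hn
  set t : ℝ := ω - 2*π*n with htdef
  have ht0 : 0 ≤ t := by
    have := Int.floor_le (ω/(2*π))
    rw [htdef]
    have : 2*π*(n:ℝ) ≤ ω := by
      rw [hn]
      calc 2*π*(⌊ω/(2*π)⌋:ℝ) ≤ 2*π*(ω/(2*π)) := by
            exact mul_le_mul_of_nonneg_left (Int.floor_le _) h2π.le
        _ = ω := by field_simp
    linarith
  have ht2 : t ≤ 2*π := by
    have hlt : ω/(2*π) < n + 1 := Int.lt_floor_add_one _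
    have : ω < 2*π*((n:ℝ)+1) := by
      calc ω = 2*π*(ω/(2*π)) := by field_simp
        _ < 2*π*((n:ℝ)+1) := by exact mul_lt_mul_of_pos_left hlt h2π
    rw [htdef]; nlinarith
  have h := lorentz_hasSum_shift n (lorentz_hasSum_base σ hσ ht0 ht2)
  have : t + 2*π*(n:ℝ) = ω := by rw [htdef]; ring
  rw [this] at h
  exact h

lemma integrable_exp_neg_abs' {b : ℝ} (hb : 0 < b) :
    Integrable (fun x : ℝ => Real.exp (-b * |x|)) := by
  have h1 : IntegrableOn (fun x : ℝ => Real.exp (-b * |x|)) (Ici 0) := by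
    rw [integrableOn_Ici_iff_integrableOn_Ioi]
    exact (exp_neg_integrableOn_Ioi 0 hb).congr_fun
      (fun x hx => by rw [abs_of_pos hx]) measurableSet_Ioi
  have h2 : IntegrableOn (fun x : ℝ => Real.exp (-b * |x|)) (Iio 0) := by
    have h3 := (MeasurePreserving.integrableOn_comp_preimage
      (Measure.measurePreserving_neg (volume : Measure ℝ))
      (Homeomorph.neg ℝ).measurableEmbedding).2 h1
    have h4 : (fun x : ℝ => Real.exp (-b * |x|)) ∘ (Neg.neg : ℝ → ℝ)
        = fun x : ℝ => Real.exp (-b * |x|) := by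
      funext x; simp [Function.comp, abs_neg]
    have h5 : (Neg.neg : ℝ → ℝ) ⁻¹' (Ici 0) = Iic 0 := by
      ext x; simp
    rw [h4, h5] at h3
    exact h3.mono_set Iio_subset_Iic_self
  have := h2.union h1
  rwa [Iio_union_Ici, integrableOn_univ] at this

lemma lorentz_deriv (σ : ℝ) (hσ : 0 < σ) (t : ℝ) :
    HasDerivAt (fun t : ℝ => t - Real.log (1 + Real.exp (2*σ*(t-π)))/(2*σ)
        + 1/(2*σ*(1 + Real.exp (2*σ*(t-π)))))
      (1/(1 + Real.exp (2*σ*(t-π)))^2) t := by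
  set w := Real.exp (2*σ*(t-π)) with hw
  have hwpos : 0 < w := Real.exp_pos _
  have h1w : 0 < 1 + w := by linarith
  -- derivative of inner exponent
  have hlin : HasDerivAt (fun t : ℝ => 2*σ*(t-π)) (2*σ) t := by
    simpa using ((hasDerivAt_id t).sub_const π).const_mul (2*σ)
  have hexp : HasDerivAt (fun t : ℝ => Real.exp (2*σ*(t-π))) (2*σ*w) t := by
    simpa [hw, mul_comm, Function.comp_def] using (Real.hasDerivAt_exp (2*σ*(t-π))).comp t hlin
  have honeexp : HasDerivAt (fun t : ℝ => 1 + Real.exp (2*σ*(t-π))) (2*σ*w) t := by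
    simpa using (hexp.const_add 1)
  have hlog : HasDerivAt (fun t : ℝ => Real.log (1 + Real.exp (2*σ*(t-π))))
      ((2*σ*w)/(1+w)) t := by
    have := (Real.hasDerivAt_log h1w.ne').comp t honeexp
    simpa [div_eq_mul_inv, mul_comm, Function.comp_def] using this
  have hden : HasDerivAt (fun t : ℝ => 2*σ*(1 + Real.exp (2*σ*(t-π)))) (2*σ*(2*σ*w)) t :=
    honeexp.const_mul (2*σ)
  have hden0 : (2*σ*(1+w)) ≠ 0 := by positivity
  have hinv : HasDerivAt (fun t : ℝ => 1/(2*σ*(1 + Real.exp (2*σ*(t-π)))))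
      (-(2*σ*(2*σ*w))/(2*σ*(1+w))^2) t := by
    simpa only [one_div, Pi.inv_def] using hden.inv hden0
  have h := ((hasDerivAt_id t).sub (hlog.div_const (2*σ))).add hinv
  refine h.congr_deriv ?_
  field_simp
  ring

lemma lorentz_P (σ : ℝ) (hσ : 0 < σ) :
    ∫ t in (0:ℝ)..(2*π), 1/(1 + Real.exp (2*σ*(t-π)))^2 =
      π + 1/(2*σ*(1 + Real.exp (2*σ*π))) - 1/(2*σ*(1 + Real.exp (-(2*σ*π)))) := by
  have hπ := Real.pi_pos
  have hcont : Continuous fun t : ℝ => 1/(1 + Real.exp (2*σ*(t-π)))^2 := by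
    apply continuous_const.div
    · fun_prop
    · intro x
      positivity
  have := intervalIntegral.integral_eq_sub_of_hasDerivAt
    (f := fun t : ℝ => t - Real.log (1 + Real.exp (2*σ*(t-π)))/(2*σ)
        + 1/(2*σ*(1 + Real.exp (2*σ*(t-π)))))
    (f' := fun t : ℝ => 1/(1 + Real.exp (2*σ*(t-π)))^2)
    (fun x _ => lorentz_deriv σ hσ x) (hcont.intervalIntegrable 0 (2*π))
  rw [this]
  beta_reduce
  have e1 : 2*σ*(2*π-π) = 2*σ*π := by ring
  have e2 : 2*σ*((0:ℝ)-π) = -(2*σ*π) := by ring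
  rw [e1, e2]
  have hlog : Real.log (1 + Real.exp (2*σ*π)) =
      2*σ*π + Real.log (1 + Real.exp (-(2*σ*π))) := by
    have hprod : 1 + Real.exp (2*σ*π) =
        Real.exp (2*σ*π) * (1 + Real.exp (-(2*σ*π))) := by
      rw [mul_add, mul_one, ← Real.exp_add]
      ring_nf
      simp [Real.exp_zero, add_comm]
    rw [hprod, Real.log_mul (Real.exp_ne_zero _) (by positivity), Real.log_exp]
  rw [hlog]
  field_simp
  ring

-- symmetry of Sc
lemma lorentzSc_sym (σ : ℝ) (u : ℝ) : lorentzSc σ (2*π - u) = lorentzSc σ u := by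
  unfold lorentzSc
  rw [show -(σ*(2*π-u)) = σ*u - 2*π*σ by ring, show σ*(2*π-u) - 2*π*σ = -(σ*u) by ring,
    add_comm]


lemma lorentzSc_lb' (σ : ℝ) (hσ : 0 < σ) (s : ℝ) :
    Real.exp (-(2*π*σ)) ≤ Real.exp (-(σ*s)) + Real.exp (σ*s - 2*π*σ) := by
  have ha : 0 < Real.exp (-(σ*s)) := Real.exp_pos _
  have hb : 0 < Real.exp (σ*s - 2*π*σ) := Real.exp_pos _
  have hab : Real.exp (-(σ*s)) * Real.exp (σ*s - 2*π*σ) = Real.exp (-(2*π*σ)) := by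
    rw [← Real.exp_add]; ring_nf
  have hE1 : Real.exp (-(2*π*σ)) < 1 := by
    have hπ := Real.pi_pos
    rw [Real.exp_lt_one_iff]; nlinarith
  nlinarith [sq_nonneg (Real.exp (-(σ*s)) - Real.exp (σ*s - 2*π*σ)),
    sq_nonneg (Real.exp (-(σ*s)) + Real.exp (σ*s - 2*π*σ))]

-- lower bound for Sc
lemma lorentzSc_lb (σ : ℝ) (hσ : 0 < σ) (s : ℝ) :
    Real.exp (-(2*π*σ)) / (1 - Real.exp (-(2*π*σ))) ≤ lorentzSc σ s := by
  have hπ := Real.pi_pos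
  have hE1 : Real.exp (-(2*π*σ)) < 1 := by
    rw [Real.exp_lt_one_iff]; nlinarith
  have hD : 0 < 1 - Real.exp (-(2*π*σ)) := by linarith
  unfold lorentzSc
  exact (div_le_div_iff_of_pos_right hD).2 (lorentzSc_lb' σ hσ s)


lemma lorentz_final (σ : ℝ) (hσ : 0 < σ) :
    σ^2*π/2 * (((1-Real.exp (-(2*π*σ)))/(σ*π))^2 *
      (π + 1/(2*σ*(1+Real.exp (2*σ*π))) - 1/(2*σ*(1+Real.exp (-(2*σ*π))))) *
        (1-Real.exp (-(2*π*σ))^2)⁻¹ +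
      ((1-Real.exp (-(2*π*σ)))/(σ*π))^2 *
      (π + 1/(2*σ*(1+Real.exp (2*σ*π))) - 1/(2*σ*(1+Real.exp (-(2*σ*π))))) *
        (1-Real.exp (-(2*π*σ))^2)⁻¹)
    = (1 - Real.tanh (σ*π)/(2*σ*π)) * Real.tanh (σ*π) := by
  have hπ := Real.pi_pos
  set u := Real.exp (σ*π) with hu
  have hu1 : 1 < u := by
    rw [hu]; exact Real.one_lt_exp_iff.2 (by positivity)
  have hu0 : 0 < u := by linarith
  have h1 : Real.exp (-(2*π*σ)) = (u^2)⁻¹ := by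
    rw [hu, ← Real.exp_nat_mul, ← Real.exp_neg]
    norm_num; ring_nf
  have h2 : Real.exp (2*σ*π) = u^2 := by
    rw [hu, ← Real.exp_nat_mul]
    norm_num; ring_nf
  have h3 : Real.exp (-(2*σ*π)) = (u^2)⁻¹ := by
    rw [hu, ← Real.exp_nat_mul, ← Real.exp_neg]
    norm_num; ring_nf
  have huu : u + u⁻¹ ≠ 0 := by positivity
  have htanh : Real.tanh (σ*π) = (u^2-1)/(u^2+1) := by
    rw [Real.tanh_eq_sinh_div_cosh, Real.sinh_eq, Real.cosh_eq, Real.exp_neg, ← hu]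
    rw [div_div_div_comm]
    norm_num
    rw [div_eq_div_iff (by positivity) (by positivity)]
    field_simp
  rw [h1, h2, h3, htanh]
  set v := u^2 with hv
  have hv1 : 1 < v := by rw [hv]; nlinarith
  have hv0 : (0:ℝ) < v := by linarith
  have e1 : (1:ℝ) - v⁻¹ = (v-1)/v := by field_simp
  have e2 : (1:ℝ) + v⁻¹ = (v+1)/v := by field_simp
  have e3 : (1:ℝ) - (v⁻¹)^2 = (v^2-1)/v^2 := by field_simp
  rw [e1, e2, e3]
  have n1 : v - 1 ≠ 0 := by linarith
  have n2 : v + 1 ≠ 0 := by positivity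
  have n3 : v^2 - 1 ≠ 0 := by nlinarith
  have n4 : v ≠ 0 := by positivity
  have n5 : σ*π ≠ 0 := by positivity
  have n6 : (1:ℝ) + v ≠ 0 := by positivity
  field_simp
  ring

lemma lorentz_integral (σ : ℝ) (hσ : 0 < σ) :
    (∫ ω : ℝ,
        (Real.exp (-σ * |ω|) / (σ * π * ∑' k : ℤ, Real.exp (-σ * |ω + 2 * π * k|))) ^ 2) =
      ((1-Real.exp (-(2*π*σ)))/(σ*π))^2 *
        (π + 1/(2*σ*(1+Real.exp (2*σ*π))) - 1/(2*σ*(1+Real.exp (-(2*σ*π))))) *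
          (1-Real.exp (-(2*π*σ))^2)⁻¹ +
      ((1-Real.exp (-(2*π*σ)))/(σ*π))^2 *
        (π + 1/(2*σ*(1+Real.exp (2*σ*π))) - 1/(2*σ*(1+Real.exp (-(2*σ*π))))) *
          (1-Real.exp (-(2*π*σ))^2)⁻¹ := by
  have hπ := Real.pi_pos
  have h2π : (0:ℝ) < 2*π := by linarith
  have hσπ : (0:ℝ) < σ*π := by positivity
  have hE0 : (0:ℝ) < Real.exp (-(2*π*σ)) := Real.exp_pos _
  have hE1 : Real.exp (-(2*π*σ)) < 1 := by rw [Real.exp_lt_one_iff]; nlinarith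
  have hD : (0:ℝ) < 1 - Real.exp (-(2*π*σ)) := by linarith
  have hSc_pos : ∀ s : ℝ, 0 < lorentzSc σ s := fun s =>
    lt_of_lt_of_le (by positivity) (lorentzSc_lb σ hσ s)
  have hT : ∀ ω : ℝ, (∑' k : ℤ, Real.exp (-σ * |ω + 2 * π * k|)) =
      lorentzSc σ (ω - 2*π*⌊ω/(2*π)⌋) := fun ω => (lorentz_hasSum σ hσ ω).tsum_eq
  have hIeq : (∫ ω : ℝ,
      (Real.exp (-σ * |ω|) / (σ * π * ∑' k : ℤ, Real.exp (-σ * |ω + 2 * π * k|))) ^ 2) =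
      ∫ ω : ℝ, (Real.exp (-σ * |ω|) / (σ * π * lorentzSc σ (ω - 2*π*⌊ω/(2*π)⌋))) ^ 2 := by
    congr 1; funext ω; rw [hT ω]
  rw [hIeq]
  set Fc : ℝ → ℝ :=
    fun ω => (Real.exp (-σ * |ω|) / (σ * π * lorentzSc σ (ω - 2*π*⌊ω/(2*π)⌋))) ^ 2 with hFc
  -- measurability
  have hmeasTc : Measurable fun ω : ℝ => lorentzSc σ (ω - 2*π*⌊ω/(2*π)⌋) := by
    have h1 : Continuous (lorentzSc σ) := by
      unfold lorentzSc
      exact ((Real.continuous_exp.comp (by fun_prop)).add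
        (Real.continuous_exp.comp (by fun_prop))).div_const _
    have h2 : Measurable fun ω : ℝ => ω - 2*π*(⌊ω/(2*π)⌋:ℝ) := by
      have h3 : Measurable fun ω : ℝ => 2*π * Int.fract (ω/(2*π)) :=
        (measurable_fract.comp (measurable_id.div_const _)).const_mul _
      convert h3 using 1
      funext ω
      rw [Int.fract]
      field_simp
    exact h1.measurable.comp h2
  have hmeasFc : Measurable Fc := by
    apply Measurable.pow_const
    exact ((Real.continuous_exp.comp (by fun_prop : Continuous fun ω : ℝ => -σ * |ω|)).measurable).div
      (measurable_const.mul hmeasTc)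
  -- integrability
  have hintFc : Integrable Fc := by
    apply Integrable.mono'
      ((integrable_exp_neg_abs' (b := 2*σ) (by positivity)).const_mul
        (((1 - Real.exp (-(2*π*σ)))/(σ*π*Real.exp (-(2*π*σ))))^2))
      hmeasFc.aestronglyMeasurable
    refine Filter.Eventually.of_forall fun ω => ?_
    have h1 : 0 ≤ Fc ω := by rw [hFc]; positivity
    rw [Real.norm_eq_abs, abs_of_nonneg h1]
    simp only [hFc]
    set s := ω - 2*π*(⌊ω/(2*π)⌋:ℝ) with hs
    have h3 : 0 < σ*π*(Real.exp (-(2*π*σ))/(1 - Real.exp (-(2*π*σ)))) := by positivity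
    have h4 : Real.exp (-σ * |ω|) / (σ*π*lorentzSc σ s)
        ≤ Real.exp (-σ * |ω|) / (σ*π*(Real.exp (-(2*π*σ))/(1 - Real.exp (-(2*π*σ))))) := by
      gcongr
      exact lorentzSc_lb σ hσ s
    have h5 := pow_le_pow_left₀ (div_pos (Real.exp_pos _) (mul_pos hσπ (hSc_pos s))).le h4 2
    refine h5.trans_eq ?_
    have h6 : Real.exp (-σ*|ω|)^2 = Real.exp (-(2*σ)*|ω|) := by
      rw [← Real.exp_nat_mul]; congr 1; push_cast; ring
    rw [div_pow, h6]
    field_simp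
  -- cover
  have hcover : (⋃ n : ℤ, Ioc (2*π*(n:ℝ)) (2*π*((n:ℝ)+1))) = univ := by
    ext x
    simp only [mem_iUnion, mem_Ioc, mem_univ, iff_true]
    refine ⟨⌈x/(2*π)⌉ - 1, ?_, ?_⟩
    · have h := Int.ceil_lt_add_one (x/(2*π))
      have h2 : ((⌈x/(2*π)⌉:ℝ) - 1) < x/(2*π) := by linarith
      push_cast
      calc 2*π*((⌈x/(2*π)⌉:ℝ) - 1) < 2*π*(x/(2*π)) := mul_lt_mul_of_pos_left h2 h2π
        _ = x := by field_simp
    · have h := Int.le_ceil (x/(2*π))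
      push_cast
      calc x = 2*π*(x/(2*π)) := by field_simp
        _ ≤ 2*π*((⌈x/(2*π)⌉:ℝ)) := mul_le_mul_of_nonneg_left h h2π.le
        _ = 2*π*((⌈x/(2*π)⌉:ℝ) - 1 + 1) := by ring
  have hdisj : Pairwise (Function.onFun Disjoint fun n : ℤ => Ioc (2*π*(n:ℝ)) (2*π*((n:ℝ)+1))) := by
    intro m n hmn
    have key : ∀ a b : ℤ, a < b →
        Disjoint (Ioc (2*π*(a:ℝ)) (2*π*((a:ℝ)+1))) (Ioc (2*π*(b:ℝ)) (2*π*((b:ℝ)+1))) := by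
      intro a b hab
      apply Set.Ioc_disjoint_Ioc.2
      have h1 : (a:ℝ)+1 ≤ (b:ℝ) := by exact_mod_cast Int.add_one_le_iff.2 hab
      calc (2*π*((a:ℝ)+1)) ⊓ (2*π*((b:ℝ)+1)) ≤ 2*π*((a:ℝ)+1) := inf_le_left
        _ ≤ 2*π*(b:ℝ) := by nlinarith
        _ ≤ (2*π*(a:ℝ)) ⊔ (2*π*(b:ℝ)) := le_sup_right
    rcases hmn.lt_or_gt with h | h
    · exact key m n h
    · exact (key n m h).symm
  have hsplit : (∫ ω, Fc ω) = ∑' n : ℤ, ∫ ω in Ioc (2*π*(n:ℝ)) (2*π*((n:ℝ)+1)), Fc ω := by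
    rw [← setIntegral_univ, ← hcover,
      integral_iUnion (fun n => measurableSet_Ioc) hdisj hintFc.integrableOn]
  -- periodic shift of the closed form
  have hTn : ∀ t : ℝ, 0 ≤ t → t ≤ 2*π → ∀ n : ℤ,
      lorentzSc σ ((t + 2*π*(n:ℝ)) - 2*π*⌊(t + 2*π*(n:ℝ))/(2*π)⌋) = lorentzSc σ t := by
    intro t h0 h2 n
    exact (lorentz_hasSum σ hσ (t + 2*π*(n:ℝ))).unique
      (lorentz_hasSum_shift n (lorentz_hasSum_base σ hσ h0 h2))
  have hshift_int : ∀ n : ℤ, (∫ ω in Ioc (2*π*(n:ℝ)) (2*π*((n:ℝ)+1)), Fc ω)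
      = ∫ t in (0:ℝ)..(2*π), Fc (t + 2*π*(n:ℝ)) := by
    intro n
    rw [intervalIntegral.integral_comp_add_right Fc (2*π*(n:ℝ))]
    rw [show (0:ℝ)+2*π*(n:ℝ) = 2*π*(n:ℝ) by ring, show 2*π+2*π*(n:ℝ) = 2*π*((n:ℝ)+1) by ring]
    rw [intervalIntegral.integral_of_le (by nlinarith : 2*π*(n:ℝ) ≤ 2*π*((n:ℝ)+1))]
  set P := ∫ t in (0:ℝ)..(2*π), (Real.exp (-(σ*t))/(σ*π*lorentzSc σ t))^2 with hP
  set Q := ∫ t in (0:ℝ)..(2*π), (Real.exp (-(σ*(2*π-t)))/(σ*π*lorentzSc σ t))^2 with hQ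
  have hIcc : uIcc (0:ℝ) (2*π) = Icc 0 (2*π) := uIcc_of_le h2π.le
  have hpos : ∀ m : ℕ, (∫ t in (0:ℝ)..(2*π), Fc (t + 2*π*((m:ℤ):ℝ)))
      = P * (Real.exp (-(2*π*σ))^2)^m := by
    intro m
    rw [hP, ← intervalIntegral.integral_mul_const]
    apply intervalIntegral.integral_congr
    intro t ht
    rw [hIcc] at ht
    obtain ⟨h0, h2⟩ := ht
    simp only [hFc]
    rw [hTn t h0 h2 (m:ℤ)]
    have habs : |t + 2*π*((m:ℤ):ℝ)| = t + 2*π*((m:ℤ):ℝ) := by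
      apply abs_of_nonneg
      have hm : (0:ℝ) ≤ ((m:ℤ):ℝ) := by push_cast; positivity
      nlinarith
    rw [habs]
    have hexp : Real.exp (-σ*(t + 2*π*((m:ℤ):ℝ))) = Real.exp (-(σ*t)) * Real.exp (-(2*π*σ))^m := by
      rw [← Real.exp_nat_mul, ← Real.exp_add]
      congr 1
      push_cast
      ring
    rw [hexp]
    ring
  have hneg : ∀ m : ℕ, (∫ t in (0:ℝ)..(2*π), Fc (t + 2*π*((Int.negSucc m):ℝ)))
      = Q * (Real.exp (-(2*π*σ))^2)^m := by
    intro m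
    rw [hQ, ← intervalIntegral.integral_mul_const]
    apply intervalIntegral.integral_congr
    intro t ht
    rw [hIcc] at ht
    obtain ⟨h0, h2⟩ := ht
    simp only [hFc]
    rw [hTn t h0 h2 (Int.negSucc m)]
    have hcast : ((Int.negSucc m):ℝ) = -((m:ℝ)+1) := by
      rw [Int.cast_negSucc]; push_cast; ring
    have habs : |t + 2*π*((Int.negSucc m):ℝ)| = (2*π - t) + 2*π*(m:ℝ) := by
      rw [hcast, abs_of_nonpos]
      · ring
      · have hm : (0:ℝ) ≤ (m:ℝ) := Nat.cast_nonneg m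
        nlinarith
    rw [habs]
    have hexp : Real.exp (-σ*((2*π - t) + 2*π*(m:ℝ)))
        = Real.exp (-(σ*(2*π-t))) * Real.exp (-(2*π*σ))^m := by
      rw [← Real.exp_nat_mul, ← Real.exp_add]
      congr 1
      ring
    rw [hexp]
    ring
  have hQP : Q = P := by
    rw [hQ, hP]
    have h1 : EqOn (fun t => (Real.exp (-(σ*(2*π-t)))/(σ*π*lorentzSc σ t))^2)
        (fun t => (fun u => (Real.exp (-(σ*u))/(σ*π*lorentzSc σ (2*π-u)))^2) (2*π - t))
        (uIcc (0:ℝ) (2*π)) := by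
      intro t _
      simp only []
      rw [show 2*π - (2*π - t) = t by ring]
    rw [intervalIntegral.integral_congr h1]
    rw [intervalIntegral.integral_comp_sub_left
      (fun u => (Real.exp (-(σ*u))/(σ*π*lorentzSc σ (2*π-u)))^2) (2*π)]
    rw [show 2*π - 2*π = (0:ℝ) by ring, show 2*π - (0:ℝ) = 2*π by ring]
    apply intervalIntegral.integral_congr
    intro u _
    simp only []
    rw [lorentzSc_sym]
  have hr0 : (0:ℝ) ≤ Real.exp (-(2*π*σ))^2 := by positivity
  have hr1 : Real.exp (-(2*π*σ))^2 < 1 := by nlinarith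
  have hgeo := hasSum_geometric_of_lt_one hr0 hr1
  have hsum : HasSum (fun n : ℤ => ∫ ω in Ioc (2*π*(n:ℝ)) (2*π*((n:ℝ)+1)), Fc ω)
      (P * (1 - Real.exp (-(2*π*σ))^2)⁻¹ + Q * (1 - Real.exp (-(2*π*σ))^2)⁻¹) := by
    have hf := hgeo.mul_left P
    have hg := hgeo.mul_left Q
    have h := hf.int_rec hg
    have heq : (fun n : ℤ => ∫ ω in Ioc (2*π*(n:ℝ)) (2*π*((n:ℝ)+1)), Fc ω) =
        fun n : ℤ => Int.rec (fun m : ℕ => P * (Real.exp (-(2*π*σ))^2)^m)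
          (fun m : ℕ => Q * (Real.exp (-(2*π*σ))^2)^m) n := by
      funext n
      cases n with
      | ofNat m =>
          show (∫ ω in Ioc (2*π*(((m:ℤ)):ℝ)) (2*π*((((m:ℤ)):ℝ)+1)), Fc ω)
            = P * (Real.exp (-(2*π*σ))^2)^m
          rw [hshift_int, hpos m, mul_comm]
      | negSucc m =>
          show (∫ ω in Ioc (2*π*(((Int.negSucc m)):ℝ)) (2*π*((((Int.negSucc m)):ℝ)+1)), Fc ω)
            = Q * (Real.exp (-(2*π*σ))^2)^m
          rw [hshift_int, hneg m, mul_comm]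
    rw [heq]
    exact h
  rw [hsplit, hsum.tsum_eq, hQP]
  have hPval : P = ((1-Real.exp (-(2*π*σ)))/(σ*π))^2 *
      (π + 1/(2*σ*(1+Real.exp (2*σ*π))) - 1/(2*σ*(1+Real.exp (-(2*σ*π))))) := by
    rw [hP, ← lorentz_P σ hσ, ← intervalIntegral.integral_const_mul]
    apply intervalIntegral.integral_congr
    intro t _
    simp only []
    have hw : (0:ℝ) < 1 + Real.exp (2*σ*(t-π)) := by positivity
    have hkey : Real.exp (-(σ*t)) + Real.exp (σ*t - 2*π*σ)
        = Real.exp (-(σ*t)) * (1 + Real.exp (2*σ*(t-π))) := by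
      rw [mul_add, mul_one, ← Real.exp_add]
      ring_nf
    unfold lorentzSc
    rw [hkey]
    field_simp
  rw [hPval]

open Real MeasureTheory in
/-- For `σ > 0`, with `Φ_L(ω, σ) = σπ ∑_{k∈ℤ} e^{−σ|ω + 2πk|}`, one has
`(σ²π/2)·∫_ℝ (e^{−σ|ω|}/Φ_L(ω, σ))² dω = (1 − tanh(σπ)/(2σπ))·tanh(σπ)`. -/
theorem lorentz_I1 (σ : ℝ) (hσ : 0 < σ) :
    σ ^ 2 * π / 2 *
        ∫ ω : ℝ,
          (Real.exp (-σ * |ω|) / (σ * π * ∑' k : ℤ, Real.exp (-σ * |ω + 2 * π * k|))) ^ 2 =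
      (1 - Real.tanh (σ * π) / (2 * σ * π)) * Real.tanh (σ * π) := by
  rw [lorentz_integral σ hσ]
  exact lorentz_final σ hσ
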